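/- For every complex number s with Re(s) > 0 and s ≠ 1, the alternating series ∑_{n=1}^∞ (-1)^{n+1} n^{-s} converges and its sum equals (1 - 2·2^{-s}) ζ(s); that is, the alternating zeta function η satisfies η(s) = (1 - 2^{1-s}) ζ(s). -/

import Mathlib

open Filter Complex Set


noncomputable def etaF (s : ℂ) (k : ℕ) : ℂ :=
  ((2 * k + 1 : ℕ) : ℂ) ^ (-s) - ((2 * k + 2 : ℕ) : ℂ) ^ (-s)

lemma etaF_bound {s : ℂ} (hs : 0 < s.re) (k : ℕ) :
    ‖etaF s k‖ ≤ ‖s‖ * (2 * (k : ℝ) + 1) ^ (-s.re - 1) := by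
  have hs0 : s ≠ 0 := fun h => by simp [h] at hs
  set a : ℝ := 2 * k + 1 with ha_def
  set b : ℝ := 2 * k + 2 with hb_def
  have hk0 : (0:ℝ) ≤ (k:ℝ) := Nat.cast_nonneg k
  have ha1 : (1 : ℝ) ≤ a := by simp only [ha_def]; linarith
  have hab : a ≤ b := by simp only [ha_def, hb_def]; linarith
  have hconv : Convex ℝ (Icc a b) := convex_Icc a b
  set C : ℝ := ‖s‖ * a ^ (-s.re - 1) with hC_def
  have key : ∀ x ∈ Icc a b,
      HasDerivWithinAt (fun y : ℝ => (y : ℂ) ^ (-s)) (-s * (x : ℂ) ^ (-s - 1)) (Icc a b) x := by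
    intro x hx
    have hx1 : (1:ℝ) ≤ x := le_trans ha1 hx.1
    have hx0 : x ≠ 0 := by linarith
    have hr : (-s - 1 : ℂ) ≠ -1 := by
      intro h
      apply hs0
      linear_combination -h
    have h1 := hasDerivAt_ofReal_cpow_const' hx0 hr
    rw [show (-s - 1 + 1 : ℂ) = -s by ring] at h1
    have h2 := h1.const_mul (-s)
    have h3 : (fun y : ℝ => -s * ((y : ℂ) ^ (-s) / (-s))) = fun y : ℝ => (y : ℂ) ^ (-s) := by
      funext y
      have : -s ≠ 0 := neg_ne_zero.mpr hs0
      field_simp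
    rw [h3] at h2
    exact h2.hasDerivWithinAt
  have bound : ∀ x ∈ Icc a b, ‖-s * (x : ℂ) ^ (-s - 1)‖ ≤ C := by
    intro x hx
    have hx1 : (1:ℝ) ≤ x := le_trans ha1 hx.1
    have hxpos : (0:ℝ) < x := by linarith
    rw [norm_mul, norm_neg]
    have hnorm : ‖(x : ℂ) ^ (-s - 1)‖ = x ^ (-s.re - 1) := by
      rw [Complex.norm_cpow_eq_rpow_re_of_pos hxpos]
      norm_num
    rw [hnorm]
    have : x ^ (-s.re - 1) ≤ a ^ (-s.re - 1) := by
      apply Real.rpow_le_rpow_of_nonpos (by linarith) hx.1 (by linarith)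
    exact mul_le_mul_of_nonneg_left this (norm_nonneg s)
  have mvt := hconv.norm_image_sub_le_of_norm_hasDerivWithin_le key bound
    (left_mem_Icc.mpr hab) (right_mem_Icc.mpr hab)
  have hba : ‖b - a‖ = 1 := by simp [ha_def, hb_def]; norm_num
  rw [hba, mul_one] at mvt
  have : etaF s k = (a : ℂ) ^ (-s) - (b : ℂ) ^ (-s) := by
    simp only [etaF, ha_def, hb_def]
    push_cast
    ring_nf
  rw [this, ← norm_sub_rev]
  exact mvt


lemma majorant_summable {σ : ℝ} (hσ : 0 < σ) :
    Summable (fun k : ℕ => (2 * (k : ℝ) + 1) ^ (-σ - 1)) := by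
  have h1 : Summable (fun k : ℕ => ((k : ℝ) + 1) ^ (-σ - 1)) := by
    have h0 : Summable (fun n : ℕ => (n : ℝ) ^ (-σ - 1)) :=
      Real.summable_nat_rpow.mpr (by linarith)
    have := (summable_nat_add_iff 1).mpr h0
    exact this.congr (fun n => by push_cast; ring_nf)
  refine h1.of_nonneg_of_le (fun k => Real.rpow_nonneg (by positivity) _) (fun k => ?_)
  apply Real.rpow_le_rpow_of_nonpos (by positivity) (by linarith [Nat.cast_nonneg (α := ℝ) k])
    (by linarith)

lemma natsum_summable {s : ℂ} (hs : 1 < s.re) :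
    Summable (fun n : ℕ => ((n + 1 : ℕ) : ℂ) ^ (-s)) := by
  refine Summable.of_norm ?_
  have h0 : Summable (fun n : ℕ => (n : ℝ) ^ (-s.re)) :=
    Real.summable_nat_rpow.mpr (by linarith)
  have h1 := (summable_nat_add_iff 1).mpr h0
  refine h1.congr (fun n => ?_)
  rw [show ((n + 1 : ℕ) : ℂ) = (((n + 1 : ℕ) : ℝ) : ℂ) by push_cast; ring]
  rw [Complex.norm_cpow_eq_rpow_re_of_pos (by positivity)]
  push_cast
  norm_num


lemma etaF_tsum_of_one_lt_re {s : ℂ} (hs : 1 < s.re) :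
    ∑' k, etaF s k = (1 - 2 * (2 : ℂ) ^ (-s)) * riemannZeta s := by
  set f : ℕ → ℂ := fun n => ((n + 1 : ℕ) : ℂ) ^ (-s) with hf
  have hsum : Summable f := natsum_summable hs
  have hinj2 : Function.Injective (fun k : ℕ => 2 * k) := fun a b h => by
    dsimp at h; omega
  have hinj2' : Function.Injective (fun k : ℕ => 2 * k + 1) := fun a b h => by
    dsimp at h; omega
  have he : Summable (fun k => f (2 * k)) := hsum.comp_injective hinj2
  have ho : Summable (fun k => f (2 * k + 1)) := hsum.comp_injective hinj2'
  have hzeta : riemannZeta s = ∑' n, f n := by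
    rw [zeta_eq_tsum_one_div_nat_add_one_cpow hs]
    refine tsum_congr (fun n => ?_)
    show 1 / ((n : ℂ) + 1) ^ s = ((n + 1 : ℕ) : ℂ) ^ (-s)
    rw [cpow_neg, one_div]
    norm_cast
  have hkey := tsum_even_add_odd he ho
  have hodd : ∑' k, f (2 * k + 1) = (2 : ℂ) ^ (-s) * riemannZeta s := by
    have hterm : ∀ k : ℕ, f (2 * k + 1) = (2 : ℂ) ^ (-s) * f k := by
      intro k
      show ((2 * k + 1 + 1 : ℕ) : ℂ) ^ (-s) = (2 : ℂ) ^ (-s) * ((k + 1 : ℕ) : ℂ) ^ (-s)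
      rw [show (2 * k + 1 + 1 : ℕ) = 2 * (k + 1) by ring, Nat.cast_mul,
        natCast_mul_natCast_cpow]
      norm_num
    rw [tsum_congr hterm, tsum_mul_left, ← hzeta]
  have hetaf : ∀ k, etaF s k = f (2 * k) - f (2 * k + 1) := by
    intro k
    simp only [etaF, hf]
    try push_cast
    try ring_nf
  rw [tsum_congr hetaf, he.tsum_sub ho, hodd]
  have heven : ∑' k, f (2 * k) = riemannZeta s - (2 : ℂ) ^ (-s) * riemannZeta s := by
    rw [← hzeta, hodd] at hkey
    linear_combination hkey
  rw [heven]
  ring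



lemma etaF_summable {s : ℂ} (hs : 0 < s.re) : Summable (etaF s) :=
  Summable.of_norm_bounded ((majorant_summable hs).mul_left ‖s‖) (etaF_bound hs)

lemma etaG_differentiableAt {s₀ : ℂ} (h : 0 < s₀.re) :
    DifferentiableAt ℂ (fun s => ∑' k, etaF s k) s₀ := by
  set σ : ℝ := s₀.re / 2 with hσ_def
  have hσ : 0 < σ := by simp only [hσ_def]; linarith
  set R : ℝ := ‖s₀‖ + 1 with hR_def
  set V : Set ℂ := {z : ℂ | σ < z.re} ∩ Metric.ball 0 R with hV_def
  have hVo : IsOpen V := ((isOpen_lt continuous_const Complex.continuous_re).inter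
    Metric.isOpen_ball)
  have hs₀V : s₀ ∈ V := by
    constructor
    · show σ < s₀.re
      simp only [hσ_def]; linarith
    · simp only [Metric.mem_ball, dist_zero_right, hR_def]
      linarith [norm_nonneg s₀]
  have hbound : ∀ (k : ℕ) (z : ℂ), z ∈ V →
      ‖etaF z k‖ ≤ R * (2 * (k : ℝ) + 1) ^ (-σ - 1) := by
    intro k z hz
    have hz1 : σ < z.re := hz.1
    have hz2 : ‖z‖ < R := by simpa [dist_zero_right] using hz.2
    have hzre : 0 < z.re := lt_trans hσ hz1
    refine le_trans (etaF_bound hzre k) ?_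
    have hbase : (1:ℝ) ≤ 2 * (k : ℝ) + 1 := by
      have : (0:ℝ) ≤ (k : ℝ) := Nat.cast_nonneg k
      linarith
    have hexp : (2 * (k : ℝ) + 1) ^ (-z.re - 1) ≤ (2 * (k : ℝ) + 1) ^ (-σ - 1) :=
      Real.rpow_le_rpow_of_exponent_le hbase (by linarith)
    have h1 : ‖z‖ * (2 * (k : ℝ) + 1) ^ (-z.re - 1) ≤ ‖z‖ * (2 * (k : ℝ) + 1) ^ (-σ - 1) :=
      mul_le_mul_of_nonneg_left hexp (norm_nonneg z)
    refine le_trans h1 ?_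
    exact mul_le_mul_of_nonneg_right hz2.le (Real.rpow_nonneg (by linarith) _)
  have hunif : TendstoUniformlyOn (fun N z => ∑ k ∈ Finset.range N, etaF z k)
      (fun z => ∑' k, etaF z k) atTop V :=
    tendstoUniformlyOn_tsum_nat ((majorant_summable hσ).mul_left R) hbound
  have hdiff : ∀ N : ℕ, DifferentiableOn ℂ (fun z => ∑ k ∈ Finset.range N, etaF z k) V := by
    intro N
    apply DifferentiableOn.fun_sum
    intro k _
    have h1 : Differentiable ℂ (fun z : ℂ => ((2 * k + 1 : ℕ) : ℂ) ^ (-z)) :=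
      (differentiable_neg).const_cpow (Or.inl (Nat.cast_ne_zero.mpr (by omega)))
    have h2 : Differentiable ℂ (fun z : ℂ => ((2 * k + 2 : ℕ) : ℂ) ^ (-z)) :=
      (differentiable_neg).const_cpow (Or.inl (Nat.cast_ne_zero.mpr (by omega)))
    exact ((h1.sub h2).differentiableOn)
  have := (hunif.tendstoLocallyUniformlyOn.differentiableOn
    (Eventually.of_forall hdiff) hVo)
  exact this.differentiableAt (hVo.mem_nhds hs₀V)


lemma etaU_preconnected : IsPreconnected {s : ℂ | 0 < s.re ∧ s ≠ 1} := by
  set C1 : Set ℂ := {z | 0 < z.re} ∩ {z | z.re < 1} with hC1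
  set C2 : Set ℂ := {z | 1 < z.re} with hC2
  set C3 : Set ℂ := {z | 0 < z.re} ∩ {z | 0 < z.im} with hC3
  set C4 : Set ℂ := {z | 0 < z.re} ∩ {z | z.im < 0} with hC4
  have p1 : IsPreconnected C1 :=
    ((convex_halfSpace_re_gt 0).inter (convex_halfSpace_re_lt 1)).isPreconnected
  have p2 : IsPreconnected C2 := (convex_halfSpace_re_gt 1).isPreconnected
  have p3 : IsPreconnected C3 :=
    ((convex_halfSpace_re_gt 0).inter (convex_halfSpace_im_gt 0)).isPreconnected
  have p4 : IsPreconnected C4 :=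
    ((convex_halfSpace_re_gt 0).inter (convex_halfSpace_im_lt 0)).isPreconnected
  have w1 : (⟨1/2, 1/2⟩ : ℂ) ∈ C3 ∩ C1 := by
    refine ⟨⟨?_, ?_⟩, ?_, ?_⟩ <;> norm_num
  have p31 : IsPreconnected (C3 ∪ C1) :=
    p3.union _ w1.1 w1.2 p1
  have w2 : (⟨2, 1⟩ : ℂ) ∈ (C3 ∪ C1) ∩ C2 :=
    ⟨Or.inl ⟨by norm_num, by norm_num⟩, show (1:ℝ) < (⟨2, 1⟩ : ℂ).re by norm_num⟩
  have p312 : IsPreconnected ((C3 ∪ C1) ∪ C2) := p31.union _ w2.1 w2.2 p2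
  have w3 : (⟨1/2, -1/2⟩ : ℂ) ∈ ((C3 ∪ C1) ∪ C2) ∩ C4 := by
    refine ⟨Or.inl (Or.inr ⟨?_, ?_⟩), ?_, ?_⟩ <;> norm_num
  have pAll : IsPreconnected (((C3 ∪ C1) ∪ C2) ∪ C4) := p312.union _ w3.1 w3.2 p4
  have hEq : {s : ℂ | 0 < s.re ∧ s ≠ 1} = ((C3 ∪ C1) ∪ C2) ∪ C4 := by
    ext z
    simp only [mem_setOf_eq, mem_union, mem_inter_iff, hC1, hC2, hC3, hC4, mem_setOf_eq]
    constructor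
    · rintro ⟨hre, hne⟩
      rcases lt_trichotomy z.im 0 with him | him | him
      · exact Or.inr ⟨hre, him⟩
      · rcases lt_trichotomy z.re 1 with h1 | h1 | h1
        · exact Or.inl (Or.inl (Or.inr ⟨hre, h1⟩))
        · exfalso; exact hne (Complex.ext h1 him)
        · exact Or.inl (Or.inr h1)
      · exact Or.inl (Or.inl (Or.inl ⟨hre, him⟩))
    · rintro (((⟨h1, h2⟩ | ⟨h1, h2⟩) | h1) | ⟨h1, h2⟩)
      · exact ⟨h1, fun h => by simp [h] at h2⟩
      · exact ⟨h1, fun h => by simp [h] at h2⟩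
      · refine ⟨by linarith, fun h => by simp [h] at h1⟩
      · exact ⟨h1, fun h => by simp [h] at h2⟩
  rw [hEq]
  exact pAll



lemma eta_partial_sum_eq (s : ℂ) (N : ℕ) :
    ∑ n ∈ Finset.Icc 1 N, (-1 : ℂ) ^ (n + 1) * (n : ℂ) ^ (-s)
      = (∑ k ∈ Finset.range (N / 2), etaF s k)
        + (if N % 2 = 1 then ((N : ℕ) : ℂ) ^ (-s) else 0) := by
  induction N with
  | zero => simp
  | succ N ih =>
    rw [Finset.sum_Icc_succ_top (by omega : 1 ≤ N + 1), ih]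
    rcases Nat.even_or_odd N with hN | hN
    · obtain ⟨m, hm⟩ := hN
      have h2 : (N + 1) / 2 = N / 2 := by omega
      have h3 : ¬ (N % 2 = 1) := by omega
      have h4 : (N + 1) % 2 = 1 := by omega
      have h5 : (-1 : ℂ) ^ (N + 1 + 1) = 1 := by
        have : Even (N + 1 + 1) := ⟨m + 1, by omega⟩
        exact this.neg_one_pow
      rw [h2, h5]
      simp [h3, h4]
    · obtain ⟨m, hm⟩ := hN
      have h2 : (N + 1) / 2 = N / 2 + 1 := by omega
      have h3 : N % 2 = 1 := by omega
      have h4 : ¬ ((N + 1) % 2 = 1) := by omega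
      have h5 : (-1 : ℂ) ^ (N + 1 + 1) = -1 := by
        have : Odd (N + 1 + 1) := ⟨m + 1, by omega⟩
        exact this.neg_one_pow
      rw [h2, h5, Finset.sum_range_succ]
      have hodd1 : 2 * (N / 2) + 1 = N := by omega
      have hodd2 : 2 * (N / 2) + 2 = N + 1 := by omega
      simp only [h3, h4, if_true, if_false, etaF, hodd1, hodd2, if_pos, if_neg]
      push_cast
      ring


lemma etaG_eq {s : ℂ} (hs : 0 < s.re) (hs1 : s ≠ 1) :
    ∑' k, etaF s k = (1 - 2 * (2 : ℂ) ^ (-s)) * riemannZeta s := by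
  set U : Set ℂ := {z : ℂ | 0 < z.re ∧ z ≠ 1} with hU
  have hUo : IsOpen U := by
    have : U = {z : ℂ | 0 < z.re} ∩ {(1 : ℂ)}ᶜ := by
      ext z; simp [hU]
    rw [this]
    exact (isOpen_lt continuous_const Complex.continuous_re).inter isOpen_compl_singleton
  have hg : AnalyticOnNhd ℂ (fun z => ∑' k, etaF z k) U :=
    DifferentiableOn.analyticOnNhd
      (fun z hz => (etaG_differentiableAt hz.1).differentiableWithinAt) hUo
  have hh : AnalyticOnNhd ℂ (fun z => (1 - 2 * (2 : ℂ) ^ (-z)) * riemannZeta z) U := by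
    refine DifferentiableOn.analyticOnNhd (fun z hz => DifferentiableAt.differentiableWithinAt ?_) hUo
    exact ((differentiableAt_const (1 : ℂ)).sub
      (((differentiable_neg.const_cpow (Or.inl (by norm_num : (2:ℂ) ≠ 0))) z).const_mul 2)).mul
      (differentiableAt_riemannZeta hz.2)
  have hmem2 : (2 : ℂ) ∈ U := by
    constructor
    · norm_num
    · intro h
      have := congrArg Complex.re h
      norm_num at this
  have hmems : s ∈ U := ⟨hs, hs1⟩
  have hev : (fun z => ∑' k, etaF z k) =ᶠ[nhds (2 : ℂ)]
      (fun z => (1 - 2 * (2 : ℂ) ^ (-z)) * riemannZeta z) := by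
    have hnhds : {z : ℂ | 1 < z.re} ∈ nhds (2 : ℂ) := by
      apply (isOpen_lt continuous_const Complex.continuous_re).mem_nhds
      norm_num
    filter_upwards [hnhds] with z hz using etaF_tsum_of_one_lt_re hz
  exact hg.eqOn_of_preconnected_of_eventuallyEq hh etaU_preconnected hmem2 hev hmems

/-- For `Re(s) > 0`, `s ≠ 1`, the alternating series `∑ (-1)^{n+1} n^{-s}`
converges to `(1 - 2·2^{-s}) ζ(s)`. -/
theorem eta_eq_alternating_sum (s : ℂ) (hs : 0 < s.re) (hs1 : s ≠ 1) :
    Tendsto (fun N : ℕ => ∑ n ∈ Finset.Icc 1 N, (-1 : ℂ) ^ (n + 1) * (n : ℂ) ^ (-s))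
      atTop (nhds ((1 - 2 * (2 : ℂ) ^ (-s)) * riemannZeta s)) := by
  have hsum := etaF_summable hs
  have hT : Tendsto (fun M : ℕ => ∑ k ∈ Finset.range M, etaF s k) atTop
      (nhds (∑' k, etaF s k)) := hsum.hasSum.tendsto_sum_nat
  have hdiv : Tendsto (fun N : ℕ => N / 2) atTop atTop :=
    tendsto_atTop_atTop.mpr fun b => ⟨2 * b, fun n hn => by omega⟩
  have h1 := hT.comp hdiv
  have h2 : Tendsto (fun N : ℕ => if N % 2 = 1 then ((N : ℕ) : ℂ) ^ (-s) else 0) atTop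
      (nhds 0) := by
    have htend : Tendsto (fun N : ℕ => (N : ℝ) ^ (-s.re)) atTop (nhds 0) :=
      (tendsto_rpow_neg_atTop hs).comp tendsto_natCast_atTop_atTop
    refine squeeze_zero_norm' ?_ htend
    filter_upwards [eventually_ge_atTop 1] with N hN
    by_cases hmod : N % 2 = 1
    · rw [if_pos hmod]
      have hNpos : (0 : ℝ) < (N : ℝ) := by exact_mod_cast hN
      rw [show ((N : ℕ) : ℂ) = (((N : ℕ) : ℝ) : ℂ) by push_cast; ring]
      rw [Complex.norm_cpow_eq_rpow_re_of_pos hNpos]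
      simp [Complex.neg_re]
    · rw [if_neg hmod]
      simp only [norm_zero]
      exact Real.rpow_nonneg (Nat.cast_nonneg N) _
  have h3 := h1.add h2
  rw [add_zero] at h3
  rw [← etaG_eq hs hs1]
  refine Tendsto.congr (fun N => ?_) h3
  exact (eta_partial_sum_eq s N).symm
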